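/- Fix reals a, b, c, d > 0, set e = 2(a+b+c)+d and h = b+c, and let ε > 0 satisfy 4ε < h. Let A be any mat whose mat-distance from T is at most ε. Then for every s ∈ [0,5] and every s-string S' of A, there is exactly one s-string S of T with sup_{z∈[0,e]} |f_{S'}(z) − f_S(z)| ≤ 2ε. -/

import Mathlib

open Set
open scoped ENNReal Classical

/-- The horizontal projection `π_H : ℝ³ → ℝ²` to the first two coordinates. -/
def piH (p : ℝ × ℝ × ℝ) : ℝ × ℝ := (p.1, p.2.1)

/-- `S` is an `s`-string over `[c,d]` with endpoint values `x₀, y₀`: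
the graph `{(s, z, f z) : z ∈ [c,d]}` of a continuous function `f` with
`f c = x₀` and `f d = y₀`. -/
def IsString (s c d x0 y0 : ℝ) (S : Set (ℝ × ℝ × ℝ)) : Prop :=
  ∃ f : ℝ → ℝ, ContinuousOn f (Icc c d) ∧ f c = x0 ∧ f d = y0 ∧
    S = {p : ℝ × ℝ × ℝ | ∃ z ∈ Icc c d, p = (s, z, f z)}

/-- The data of a mat: the rectangle `[a,b] × [c,d]`, the endpoint values
`x₀, y₀`, and for each `s` a family of `s`-strings (given as a set of sets). -/
structure MatData where
  a : ℝ
  b : ℝ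
  c : ℝ
  d : ℝ
  x0 : ℝ
  y0 : ℝ
  strings : ℝ → Set (Set (ℝ × ℝ × ℝ))

/-- The `s`-section of a mat: the closure of the union of its `s`-strings. -/
def MatData.sect (M : MatData) (s : ℝ) : Set (ℝ × ℝ × ℝ) :=
  closure (⋃ S ∈ M.strings s, S)

/-- The underlying set of a mat: the union of its sections. -/
def MatData.carrier (M : MatData) : Set (ℝ × ℝ × ℝ) :=
  ⋃ s ∈ Icc M.a M.b, M.sect s

/-- The mat axioms. -/
def IsMat (M : MatData) : Prop :=
  M.a ≤ M.b ∧ M.c ≤ M.d ∧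
  IsCompact M.carrier ∧
  piH '' M.carrier = Icc M.a M.b ×ˢ Icc M.c M.d ∧
  (∀ s ∈ Icc M.a M.b, (M.strings s).Nonempty) ∧
  (∀ s ∈ Icc M.a M.b, ∀ S ∈ M.strings s, IsString s M.c M.d M.x0 M.y0 S) ∧
  (∀ s ∈ Icc M.a M.b, IsCompact (M.sect s)) ∧
  (∀ s ∈ Icc M.a M.b,
    M.sect s ⊆ {p : ℝ × ℝ × ℝ | p.1 = s ∧ p.2.1 ∈ Icc M.c M.d})

/-- The distance between two strings: the supremum, over pairs of points with
the same second coordinate, of the distance of their third coordinates.  For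
strings over the same interval this is `sup_z |f_S(z) − f_{S'}(z)|`. -/
noncomputable def sDist (S S' : Set (ℝ × ℝ × ℝ)) : ℝ≥0∞ :=
  ⨆ p ∈ S, ⨆ q ∈ S', ⨆ _ : p.2.1 = q.2.1, edist p.2.2 q.2.2

/-- The mat-distance: `∞` if the horizontal projections differ, and otherwise
the supremum over `s` of the Hausdorff-style distance between the families of
`s`-strings. -/
noncomputable def matDist (M M' : MatData) : ℝ≥0∞ :=
  if Icc M.a M.b ×ˢ Icc M.c M.d = Icc M'.a M'.b ×ˢ Icc M'.c M'.d then
    ⨆ s ∈ Icc M.a M.b,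
      max (⨆ S ∈ M.strings s, ⨅ S' ∈ M'.strings s, sDist S S')
          (⨆ S' ∈ M'.strings s, ⨅ S ∈ M.strings s, sDist S S')
  else ⊤

/-- The graph string of `f` over `[0, e]` at first coordinate `s`. -/
def strGraph (s e : ℝ) (f : ℝ → ℝ) : Set (ℝ × ℝ × ℝ) :=
  {p : ℝ × ℝ × ℝ | ∃ z ∈ Icc 0 e, p = (s, z, f z)}

/-- The height function of the up bridges of `T`. -/
noncomputable def fUp (a b c d : ℝ) (z : ℝ) : ℝ :=
  max 0 (min (b + c) (min (z - a) (a + 2 * (b + c) + d - z)))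

/-- The height function of the central down bridge of `T`. -/
noncomputable def fDown (a b c d : ℝ) (z : ℝ) : ℝ :=
  min 0 (max (-b) (max (a - z) (z - (a + 2 * (b + c) + d))))

/-- The strings of the mat `T`: the flat strings for `s ∈ [0,1] ∪ [4,5]`, the
up-bridge strings for `s ∈ [1,2] ∪ [3,4]`, and the down-bridge strings for
`s ∈ [2,3]`. -/
def Tstrings (a b c d : ℝ) (s : ℝ) : Set (Set (ℝ × ℝ × ℝ)) :=
  {S | (s ∈ Icc (0 : ℝ) 1 ∪ Icc (4 : ℝ) 5 ∧
          S = strGraph s (2 * (a + b + c) + d) (fun _ => 0)) ∨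
       (s ∈ Icc (1 : ℝ) 2 ∪ Icc (3 : ℝ) 4 ∧
          S = strGraph s (2 * (a + b + c) + d) (fUp a b c d)) ∨
       (s ∈ Icc (2 : ℝ) 3 ∧
          S = strGraph s (2 * (a + b + c) + d) (fDown a b c d))}

/-- The mat `T`, with horizontal projection `[0,5] × [0,e]`. -/
def TMat (a b c d : ℝ) : MatData where
  a := 0
  b := 5
  c := 0
  d := 2 * (a + b + c) + d
  x0 := 0
  y0 := 0
  strings := Tstrings a b c d

/-- The strings of `T³`: concatenations of three strings of `T`, translated by
`(0,−e,0)`, `(0,0,0)` and `(0,e,0)` respectively. -/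
def T3strings (a b c d : ℝ) (s : ℝ) : Set (Set (ℝ × ℝ × ℝ)) :=
  {S | ∃ S1 ∈ Tstrings a b c d s, ∃ S2 ∈ Tstrings a b c d s,
       ∃ S3 ∈ Tstrings a b c d s,
    S = (fun p : ℝ × ℝ × ℝ => (p.1, p.2.1 - (2 * (a + b + c) + d), p.2.2)) '' S1 ∪
        S2 ∪
        (fun p : ℝ × ℝ × ℝ => (p.1, p.2.1 + (2 * (a + b + c) + d), p.2.2)) '' S3}

/-- The mat `T³`, with horizontal projection `[0,5] × [−e,2e]`. -/
def T3Mat (a b c d : ℝ) : MatData where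
  a := 0
  b := 5
  c := -(2 * (a + b + c) + d)
  d := 2 * (2 * (a + b + c) + d)
  x0 := 0
  y0 := 0
  strings := T3strings a b c d

/-- If `4ε < h = b + c` and `A` is a mat within mat-distance `ε` of `T`, then
every string of `A` is `2ε`-close to a unique string of `T`. -/
theorem statement12 (a b c d : ℝ) (ha : 0 < a) (hb : 0 < b) (hc : 0 < c)
    (hd : 0 < d) (ε : ℝ) (hε : 0 < ε) (hεh : 4 * ε < b + c)
    (A : MatData) (hA : IsMat A)
    (hdist : matDist A (TMat a b c d) ≤ ENNReal.ofReal ε) :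
    ∀ s ∈ Icc (0 : ℝ) 5, ∀ S' ∈ A.strings s,
      ∃! S : Set (ℝ × ℝ × ℝ),
        S ∈ Tstrings a b c d s ∧ sDist S' S ≤ ENNReal.ofReal (2 * ε) := by
  intro s hs S' hS'
  obtain ⟨e, he⟩ : ∃ e : ℝ, e = 2 * (a + b + c) + d := ⟨_, rfl⟩
  have hεne : ENNReal.ofReal ε ≠ ⊤ := ENNReal.ofReal_ne_top
  have hprod : Icc A.a A.b ×ˢ Icc A.c A.d = Icc (0:ℝ) 5 ×ˢ Icc (0:ℝ) e := by
    by_contra hcon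
    rw [matDist] at hdist
    simp only [TMat] at hdist
    rw [he] at hcon
    simp only [hcon, if_false] at hdist
    exact hεne (top_le_iff.mp hdist)
  have hRHSne : ((Icc (0:ℝ) 5) ×ˢ (Icc (0:ℝ) e)).Nonempty :=
    ⟨(0, 0), ⟨⟨le_refl _, by norm_num⟩, ⟨le_refl _, show (0:ℝ) ≤ e by linarith⟩⟩⟩
  have hLHSne : ((Icc A.a A.b) ×ˢ (Icc A.c A.d)).Nonempty := by
    rw [hprod]; exact hRHSne
  obtain ⟨hAB, hCD⟩ := (Set.prod_eq_prod_iff_of_nonempty hLHSne).mp hprod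
  have hs' : s ∈ Icc A.a A.b := by rw [hAB]; exact hs
  -- unfold matDist using the positive if-condition
  have hprod' := hprod
  rw [he] at hprod'
  rw [matDist, if_pos (by simpa [TMat] using hprod')] at hdist
  have h1 : max (⨆ S ∈ A.strings s, ⨅ S2 ∈ (TMat a b c d).strings s, sDist S S2)
      (⨆ S2 ∈ (TMat a b c d).strings s, ⨅ S ∈ A.strings s, sDist S S2)
      ≤ ENNReal.ofReal ε :=
    le_trans (le_iSup₂ (f := fun (t : ℝ) (_ : t ∈ Icc A.a A.b) =>
      max (⨆ S ∈ A.strings t, ⨅ S2 ∈ (TMat a b c d).strings t, sDist S S2)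
          (⨆ S2 ∈ (TMat a b c d).strings t, ⨅ S ∈ A.strings t, sDist S S2)) s hs') hdist
  have h2 : ⨅ S ∈ Tstrings a b c d s, sDist S' S ≤ ENNReal.ofReal ε :=
    le_trans (le_iSup₂ (f := fun S (_ : S ∈ A.strings s) =>
      ⨅ S2 ∈ (TMat a b c d).strings s, sDist S S2) S' hS')
      (le_trans (le_max_left _ _) h1)
  have h3 : ⨅ S ∈ Tstrings a b c d s, sDist S' S < ENNReal.ofReal (2 * ε) :=
    h2.trans_lt ((ENNReal.ofReal_lt_ofReal_iff (by linarith)).mpr (by linarith))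
  rw [iInf_lt_iff] at h3
  obtain ⟨S, h3⟩ := h3
  rw [iInf_lt_iff] at h3
  obtain ⟨hS, hSd⟩ := h3
  -- the string function of S'
  obtain ⟨f', -, -, -, hS'eq⟩ := hA.2.2.2.2.2.1 s hs' S' hS'
  obtain ⟨z, hz⟩ : ∃ z : ℝ, z = a + b + c + d / 2 := ⟨_, rfl⟩
  have hzCD : z ∈ Icc A.c A.d := by
    rw [hCD]; exact ⟨by linarith, by linarith⟩
  have hp : (s, z, f' z) ∈ S' := by rw [hS'eq]; exact ⟨z, hzCD, rfl⟩
  have key : ∀ g : ℝ → ℝ, sDist S' (strGraph s (2 * (a + b + c) + d) g)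
      ≤ ENNReal.ofReal (2 * ε) → |f' z - g z| ≤ 2 * ε := by
    intro g hg
    have hq : (s, z, g z) ∈ strGraph s (2 * (a + b + c) + d) g :=
      ⟨z, ⟨by linarith, by linarith⟩, rfl⟩
    have hle : edist (f' z) (g z) ≤ sDist S' (strGraph s (2 * (a + b + c) + d) g) := by
      refine le_iSup₂_of_le (s, z, f' z) hp ?_
      refine le_iSup₂_of_le (s, z, g z) hq ?_
      exact le_iSup_of_le rfl (le_refl _)
    have := hle.trans hg
    rw [edist_dist] at this
    have := (ENNReal.ofReal_le_ofReal_iff (by linarith)).mp this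
    rwa [Real.dist_eq] at this
  have hup : fUp a b c d z = b + c := by
    unfold fUp
    rw [show z - a = b + c + d / 2 by rw [hz]; ring,
        show a + 2 * (b + c) + d - z = b + c + d / 2 by rw [hz]; ring,
        min_self, min_eq_left (by linarith), max_eq_right (by linarith)]
  have hdown : fDown a b c d z = -b := by
    unfold fDown
    rw [show a - z = -(b + c + d / 2) by rw [hz]; ring,
        show z - (a + 2 * (b + c) + d) = -(b + c + d / 2) by rw [hz]; ring,
        max_self, max_eq_left (by linarith), min_eq_right (by linarith)]
  have main : ∀ S₁ S₂ : Set (ℝ × ℝ × ℝ), S₁ ∈ Tstrings a b c d s →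
      S₂ ∈ Tstrings a b c d s → sDist S' S₁ ≤ ENNReal.ofReal (2 * ε) →
      sDist S' S₂ ≤ ENNReal.ofReal (2 * ε) → S₁ = S₂ := by
    intro S₁ S₂ h₁ h₂ hd₁ hd₂
    rcases h₁ with ⟨hm₁, rfl⟩ | ⟨hm₁, rfl⟩ | ⟨hm₁, rfl⟩ <;>
      rcases h₂ with ⟨hm₂, rfl⟩ | ⟨hm₂, rfl⟩ | ⟨hm₂, rfl⟩
    · rfl
    · -- flat vs up
      exfalso
      have k₁ := key _ hd₁
      have k₂ := key _ hd₂
      rw [hup] at k₂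
      rw [abs_le] at k₁ k₂
      linarith [k₁.1, k₁.2, k₂.1, k₂.2]
    · -- flat vs down : s-membership contradiction
      exfalso
      rcases hm₁ with h | h <;> [exact absurd hm₂.1 (by linarith [h.2]);
        exact absurd hm₂.2 (by linarith [h.1])]
    · -- up vs flat
      exfalso
      have k₁ := key _ hd₁
      have k₂ := key _ hd₂
      rw [hup] at k₁
      rw [abs_le] at k₁ k₂
      linarith [k₁.1, k₁.2, k₂.1, k₂.2]
    · rfl
    · -- up vs down
      exfalso
      have k₁ := key _ hd₁
      have k₂ := key _ hd₂
      rw [hup] at k₁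
      rw [hdown] at k₂
      rw [abs_le] at k₁ k₂
      linarith [k₁.1, k₁.2, k₂.1, k₂.2]
    · -- down vs flat
      exfalso
      rcases hm₂ with h | h <;> [exact absurd hm₁.1 (by linarith [h.2]);
        exact absurd hm₁.2 (by linarith [h.1])]
    · -- down vs up
      exfalso
      have k₁ := key _ hd₁
      have k₂ := key _ hd₂
      rw [hdown] at k₁
      rw [hup] at k₂
      rw [abs_le] at k₁ k₂
      linarith [k₁.1, k₁.2, k₂.1, k₂.2]
    · rfl
  exact ⟨S, ⟨hS, hSd.le⟩, fun S₂ h₂ => main S₂ S h₂.1 hS h₂.2 hSd.le⟩
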